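/- With G_{m,k}(q) = det_{0≤i,j≤k-1}( g_{m-k+i+1, m-k+j}(q) ) where g_{k,m}(q) = h_{2m-k}({1}^{k-m+1},{q}^{k-m}) + h_{2m-k}({1}^{k-m},{q}^{k-m+1}), one has G_{m,m-1}(q) = 2·G_{m,m-2}(q) for all m ≥ 3. -/

import Mathlib

/-- `hh q r s n` is the complete homogeneous symmetric function `h_n({1}^r, {q}^s)`. -/
noncomputable def hh {K : Type*} [CommSemiring K] (q : K) (r s : ℕ) (n : ℕ) : K :=
  PowerSeries.coeff n
    ((PowerSeries.mk fun _ => (1 : K)) ^ r * (PowerSeries.mk fun k => q ^ k) ^ s)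

/-- `h_n({1}^r,{q}^s)` with integer arguments, zero when `r < 0`, `s < 0` or `n < 0`. -/
noncomputable def hz {K : Type*} [CommSemiring K] (q : K) (r s n : ℤ) : K :=
  if 0 ≤ r ∧ 0 ≤ s ∧ 0 ≤ n then hh q r.toNat s.toNat n.toNat else 0

/-- `g_{k,m}(q) = h_{2m-k}({1}^{k-m+1},{q}^{k-m}) + h_{2m-k}({1}^{k-m},{q}^{k-m+1})`. -/
noncomputable def gP (k m : ℤ) : Polynomial ℤ :=
  hz (Polynomial.X : Polynomial ℤ) (k - m + 1) (k - m) (2 * m - k) +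
    hz (Polynomial.X : Polynomial ℤ) (k - m) (k - m + 1) (2 * m - k)

/-- The q-Salié coefficient `G_{m,k}(q) = det_{0≤i,j≤k-1}( g_{m-k+i+1,m-k+j}(q) )`. -/
noncomputable def Gdet (m k : ℕ) : Polynomial ℤ :=
  Matrix.det (Matrix.of fun i j : Fin k =>
    gP ((m : ℤ) - k + i + 1) ((m : ℤ) - k + j))


lemma hh_zero {K : Type*} [CommSemiring K] (q : K) (r s : ℕ) : hh q r s 0 = 1 := by
  simp [hh, ← PowerSeries.coeff_zero_eq_constantCoeff_apply, map_mul, map_pow,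
    PowerSeries.constantCoeff_mk]

lemma gP_neg (k m : ℤ) (h : 2 * m - k < 0) : gP k m = 0 := by
  unfold gP hz
  rw [if_neg (by omega), if_neg (by omega)]
  simp

lemma gP_two_one : gP 2 1 = 2 := by
  unfold gP hz
  norm_num [hh_zero]

lemma key (n : ℕ) :
    (Matrix.of fun i j : Fin (n + 2) => gP ((i : ℤ) + 2) ((j : ℤ) + 1)).det =
      2 * (Matrix.of fun i j : Fin (n + 1) => gP ((i : ℤ) + 3) ((j : ℤ) + 2)).det := by
  rw [Matrix.det_succ_column_zero, Finset.sum_eq_single 0]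
  · rw [Fin.succAbove_zero]
    simp only [Matrix.submatrix_apply, Matrix.of_apply, Fin.val_zero, pow_zero, one_mul,
      Nat.cast_zero, zero_add, gP_two_one]
    congr 1
  · intro i _ hi
    have h1 : 1 ≤ (i : ℕ) := Nat.pos_of_ne_zero fun h => hi (Fin.ext h)
    have : gP ((i : ℤ) + 2) ((0 : Fin (n + 2)) + 1) = 0 := by
      apply gP_neg
      have : (1 : ℤ) ≤ (i : ℕ) := by exact_mod_cast h1
      simp only [Fin.val_zero, Nat.cast_zero]
      omega
    simp only [Matrix.of_apply] at *
    simp_all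
  · simp

/-- for `m ≥ 3`, `G_{m,m-1}(q) = 2 G_{m,m-2}(q)`. -/
theorem Gdet_top_eq (m : ℕ) (hm : 3 ≤ m) : Gdet m (m - 1) = 2 * Gdet m (m - 2) := by
  obtain ⟨n, rfl⟩ : ∃ n, m = n + 3 := ⟨m - 3, by omega⟩
  have h1 : n + 3 - 1 = n + 2 := by omega
  have h2 : n + 3 - 2 = n + 1 := by omega
  rw [h1, h2]
  unfold Gdet
  have e1 : (Matrix.of fun i j : Fin (n + 2) =>
      gP (((n + 3 : ℕ) : ℤ) - ((n + 2 : ℕ) : ℤ) + i + 1) (((n + 3 : ℕ) : ℤ) - ((n + 2 : ℕ) : ℤ) + j)) =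
      Matrix.of fun i j : Fin (n + 2) => gP ((i : ℤ) + 2) ((j : ℤ) + 1) := by
    ext i j
    simp only [Matrix.of_apply]
    congr 1 <;> push_cast <;> ring
  have e2 : (Matrix.of fun i j : Fin (n + 1) =>
      gP (((n + 3 : ℕ) : ℤ) - ((n + 1 : ℕ) : ℤ) + i + 1) (((n + 3 : ℕ) : ℤ) - ((n + 1 : ℕ) : ℤ) + j)) =
      Matrix.of fun i j : Fin (n + 1) => gP ((i : ℤ) + 3) ((j : ℤ) + 2) := by
    ext i j
    simp only [Matrix.of_apply]
    congr 1 <;> push_cast <;> ring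
  rw [e1, e2, key]
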